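/- Let T = conv{A₁,A₂,A₃} ⊂ ℝ² be a triangle with affinely independent vertices whose three interior angles are all at most π/2, let D be a point in the relative interior of e₁ = [A₂,A₃] and E a point in the relative interior of e₂ = [A₁,A₃], let K = conv{E,D,A₃}, let t be a unit vector parallel to D − E, n a unit vector orthogonal to t, x_T a point of [D,E], and let β₁ > 0, β₂ > 0. Let Ψ, Υ, Θ ∈ RT × RT be the unique pairs with all three degrees of freedom zero and jump data (⟨·₁(x_T) − ·₂(x_T), n⟩, β₁⟨·₁(x_T), t⟩ − β₂⟨·₂(x_T), t⟩, div ·₁ − div ·₂) equal to (1,0,0), (0,1,0), (0,0,1) respectively, and for i = 1,2,3 let φ⁽ⁱ⁾ ∈ RT × RT be the unique pair satisfying the IFE interface conditions with N_j(φ⁽ⁱ⁾) = δ_{ij}. Then every pair (w₁,w₂) ∈ RT × RT satisfies, for s = 1,2: w_s = ⟨w₁(x_T) − w₂(x_T), n⟩·Ψ_s + (β₁⟨w₁(x_T), t⟩ − β₂⟨w₂(x_T), t⟩)·Υ_s + (div w₁ − div w₂)·Θ_s + Σᵢ Nᵢ(w)·φ⁽ⁱ⁾_s. -/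
import Mathlib


open Real MeasureTheory RealInnerProductSpace

noncomputable section

abbrev V2 : Type := EuclideanSpace ℝ (Fin 2)

/-- The lowest-order Raviart–Thomas shape function with data `(c, b)`: `x ↦ c + b • x`
(its divergence is the constant `2 * b`). -/
def rt (c : V2) (b : ℝ) : V2 → V2 := fun x => c + b • x

/-- Arclength line integral of a scalar function over the segment `[P, Q]`. -/
def lineInt (f : V2 → ℝ) (P Q : V2) : ℝ :=
  (∫ s in (0:ℝ)..1, f (P + s • (Q - P))) * ‖Q - P‖

/-- First degree of freedom of the piecewise pair `(φ₁, φ₂)` (with `φ₁` on `K` and `φ₂` on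
`T∖K`): `N₁(φ) = (1/|e₁|)(∫_{[A₂,D]} φ₂·n₁ ds + ∫_{[D,A₃]} φ₁·n₁ ds)`. -/
def dof1 (A₂ A₃ D n₁ : V2) (c₁ : V2) (b₁ : ℝ) (c₂ : V2) (b₂ : ℝ) : ℝ :=
  (1 / ‖A₃ - A₂‖) *
    (lineInt (fun x => ⟪rt c₂ b₂ x, n₁⟫) A₂ D + lineInt (fun x => ⟪rt c₁ b₁ x, n₁⟫) D A₃)

/-- `N₂(φ) = (1/|e₂|)(∫_{[A₁,E]} φ₂·n₂ ds + ∫_{[E,A₃]} φ₁·n₂ ds)`. -/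
def dof2 (A₁ A₃ E n₂ : V2) (c₁ : V2) (b₁ : ℝ) (c₂ : V2) (b₂ : ℝ) : ℝ :=
  (1 / ‖A₃ - A₁‖) *
    (lineInt (fun x => ⟪rt c₂ b₂ x, n₂⟫) A₁ E + lineInt (fun x => ⟪rt c₁ b₁ x, n₂⟫) E A₃)

/-- `N₃(φ) = (1/|e₃|) ∫_{[A₁,A₂]} φ₂·n₃ ds`. -/
def dof3 (A₁ A₂ n₃ : V2) (c₂ : V2) (b₂ : ℝ) : ℝ :=
  (1 / ‖A₂ - A₁‖) * lineInt (fun x => ⟪rt c₂ b₂ x, n₃⟫) A₁ A₂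

/-- The IFE interface conditions for the pair `(φ₁, φ₂) = (rt c₁ b₁, rt c₂ b₂)`:
(i) `⟨φ₁(x) - φ₂(x), n⟩ = 0` on the segment `[D, E]`;
(ii) `β₁⟨φ₁(x_T), t⟩ = β₂⟨φ₂(x_T), t⟩`;
(iii) `div φ₁ = div φ₂`. -/
def ifeCond (D E xT t n : V2) (β₁ β₂ : ℝ) (c₁ : V2) (b₁ : ℝ) (c₂ : V2) (b₂ : ℝ) : Prop :=
  (∀ x ∈ segment ℝ D E, ⟪rt c₁ b₁ x - rt c₂ b₂ x, n⟫ = 0) ∧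
    β₁ * ⟪rt c₁ b₁ xT, t⟫ = β₂ * ⟪rt c₂ b₂ xT, t⟫ ∧
    2 * b₁ = 2 * b₂

open intervalIntegral in
lemma lineInt_rt (c m P Q : V2) (b : ℝ) :
    lineInt (fun x => ⟪rt c b x, m⟫) P Q
      = (⟪c, m⟫ + b * ⟪P, m⟫ + b * ⟪Q - P, m⟫ / 2) * ‖Q - P‖ := by
  unfold lineInt
  congr 1
  have h : ∀ s : ℝ, ⟪rt c b (P + s • (Q - P)), m⟫
      = (⟪c, m⟫ + b * ⟪P, m⟫) + s * (b * ⟪Q - P, m⟫) := by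
    intro s
    simp [rt, inner_add_left, real_inner_smul_left]
    ring
  simp only [h]
  have key : ∀ A B : ℝ, ∫ s in (0:ℝ)..1, (A + s * B) = A + B / 2 := by
    intro A B
    have h1 : IntervalIntegrable (fun _ : ℝ => A) MeasureTheory.volume 0 1 :=
      intervalIntegrable_const
    have h2 : IntervalIntegrable (fun s : ℝ => s * B) MeasureTheory.volume 0 1 :=
      (continuous_id.mul continuous_const).intervalIntegrable _ _
    have h3 := intervalIntegral.integral_add h1 h2
    rw [h3, intervalIntegral.integral_mul_const]
    rw [show (∫ x in (0:ℝ)..1, x) = ((1:ℝ)^2 - 0^2)/2 from integral_id]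
    rw [intervalIntegral.integral_const]
    norm_num
    ring
  rw [key]

lemma dof1_eq (A₂ A₃ D n₁ : V2) (c₁ : V2) (b₁ : ℝ) (c₂ : V2) (b₂ : ℝ) :
    dof1 A₂ A₃ D n₁ c₁ b₁ c₂ b₂
      = (1 / ‖A₃ - A₂‖) *
          ((⟪c₂, n₁⟫ + b₂ * ⟪A₂, n₁⟫ + b₂ * ⟪D - A₂, n₁⟫ / 2) * ‖D - A₂‖ +
            (⟪c₁, n₁⟫ + b₁ * ⟪D, n₁⟫ + b₁ * ⟪A₃ - D, n₁⟫ / 2) * ‖A₃ - D‖) := by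
  simp only [dof1, lineInt_rt]

lemma dof2_eq (A₁ A₃ E n₂ : V2) (c₁ : V2) (b₁ : ℝ) (c₂ : V2) (b₂ : ℝ) :
    dof2 A₁ A₃ E n₂ c₁ b₁ c₂ b₂
      = (1 / ‖A₃ - A₁‖) *
          ((⟪c₂, n₂⟫ + b₂ * ⟪A₁, n₂⟫ + b₂ * ⟪E - A₁, n₂⟫ / 2) * ‖E - A₁‖ +
            (⟪c₁, n₂⟫ + b₁ * ⟪E, n₂⟫ + b₁ * ⟪A₃ - E, n₂⟫ / 2) * ‖A₃ - E‖) := by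
  simp only [dof2, lineInt_rt]

lemma dof3_eq (A₁ A₂ n₃ : V2) (c₂ : V2) (b₂ : ℝ) :
    dof3 A₁ A₂ n₃ c₂ b₂
      = (1 / ‖A₂ - A₁‖) *
          ((⟪c₂, n₃⟫ + b₂ * ⟪A₁, n₃⟫ + b₂ * ⟪A₂ - A₁, n₃⟫ / 2) * ‖A₂ - A₁‖) := by
  simp only [dof3, lineInt_rt]

abbrev M6 : Type := (V2 × ℝ) × (V2 × ℝ)

def Lj0 (xT n : V2) : M6 →ₗ[ℝ] ℝ where
  toFun p := ⟪rt p.1.1 p.1.2 xT - rt p.2.1 p.2.2 xT, n⟫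
  map_add' p q := by
    simp [rt, inner_add_left, inner_sub_left, real_inner_smul_left, add_smul]; ring
  map_smul' a p := by
    simp [rt, inner_add_left, inner_sub_left, real_inner_smul_left, smul_smul]; ring

def Lj1 (xT t : V2) (β₁ β₂ : ℝ) : M6 →ₗ[ℝ] ℝ where
  toFun p := β₁ * ⟪rt p.1.1 p.1.2 xT, t⟫ - β₂ * ⟪rt p.2.1 p.2.2 xT, t⟫
  map_add' p q := by
    simp [rt, inner_add_left, real_inner_smul_left, add_smul]; ring
  map_smul' a p := by
    simp [rt, inner_add_left, real_inner_smul_left, smul_smul]; ring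

def Lj2 : M6 →ₗ[ℝ] ℝ where
  toFun p := 2 * p.1.2 - 2 * p.2.2
  map_add' p q := by simp; ring
  map_smul' a p := by simp; ring

def Lj3 (A₂ A₃ D n₁ : V2) : M6 →ₗ[ℝ] ℝ where
  toFun p := dof1 A₂ A₃ D n₁ p.1.1 p.1.2 p.2.1 p.2.2
  map_add' p q := by
    simp only [dof1_eq, Prod.fst_add, Prod.snd_add, inner_add_left, smul_eq_mul]; ring
  map_smul' a p := by
    simp only [dof1_eq, Prod.smul_fst, Prod.smul_snd, RingHom.id_apply,
      real_inner_smul_left, smul_eq_mul]; ring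

def Lj4 (A₁ A₃ E n₂ : V2) : M6 →ₗ[ℝ] ℝ where
  toFun p := dof2 A₁ A₃ E n₂ p.1.1 p.1.2 p.2.1 p.2.2
  map_add' p q := by
    simp only [dof2_eq, Prod.fst_add, Prod.snd_add, inner_add_left, smul_eq_mul]; ring
  map_smul' a p := by
    simp only [dof2_eq, Prod.smul_fst, Prod.smul_snd, RingHom.id_apply,
      real_inner_smul_left, smul_eq_mul]; ring

def Lj5 (A₁ A₂ n₃ : V2) : M6 →ₗ[ℝ] ℝ where
  toFun p := dof3 A₁ A₂ n₃ p.2.1 p.2.2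
  map_add' p q := by
    simp only [dof3_eq, Prod.fst_add, Prod.snd_add, inner_add_left, smul_eq_mul]; ring
  map_smul' a p := by
    simp only [dof3_eq, Prod.smul_fst, Prod.smul_snd, RingHom.id_apply,
      real_inner_smul_left, smul_eq_mul]; ring

def jmap (A₁ A₂ A₃ D E xT t n n₁ n₂ n₃ : V2) (β₁ β₂ : ℝ) :
    M6 →ₗ[ℝ] (Fin 6 → ℝ) :=
  LinearMap.pi ![Lj0 xT n, Lj1 xT t β₁ β₂, Lj2, Lj3 A₂ A₃ D n₁, Lj4 A₁ A₃ E n₂, Lj5 A₁ A₂ n₃]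

/-- The decomposition identity (pro_decomp1) at the core of Lemma 4.7: any piecewise
Raviart–Thomas pair `w` is the combination of the auxiliary functions `Ψ, Υ, Θ` (weighted
by its jump data at `x_T`) and the IFE basis functions `φ⁽ⁱ⁾` (weighted by its degrees of
freedom). -/
theorem stmt10 (A₁ A₂ A₃ D E t n xT n₁ n₂ n₃ : V2) (β₁ β₂ : ℝ)
    (hA : AffineIndependent ℝ ![A₁, A₂, A₃])
    (hang1 : EuclideanGeometry.angle A₂ A₁ A₃ ≤ π / 2)
    (hang2 : EuclideanGeometry.angle A₁ A₂ A₃ ≤ π / 2)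
    (hang3 : EuclideanGeometry.angle A₁ A₃ A₂ ≤ π / 2)
    (hD : D ∈ openSegment ℝ A₂ A₃) (hE : E ∈ openSegment ℝ A₁ A₃)
    (ht : ‖t‖ = 1) (htpar : ∃ c : ℝ, D - E = c • t)
    (hn : ‖n‖ = 1) (hnt : ⟪n, t⟫ = 0)
    (hxT : xT ∈ segment ℝ D E)
    (hn₁ : ‖n₁‖ = 1) (hn₁e : ⟪n₁, A₃ - A₂⟫ = 0) (hn₁o : ⟪n₁, A₁ - A₂⟫ < 0)
    (hn₂ : ‖n₂‖ = 1) (hn₂e : ⟪n₂, A₃ - A₁⟫ = 0) (hn₂o : ⟪n₂, A₂ - A₁⟫ < 0)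
    (hn₃ : ‖n₃‖ = 1) (hn₃e : ⟪n₃, A₂ - A₁⟫ = 0) (hn₃o : ⟪n₃, A₃ - A₁⟫ < 0)
    (hβ₁ : 0 < β₁) (hβ₂ : 0 < β₂)
    -- the auxiliary pair Ψ: zero degrees of freedom, jump data (1, 0, 0)
    (Pc₁ Pc₂ : V2) (Pb₁ Pb₂ : ℝ)
    (hP1 : dof1 A₂ A₃ D n₁ Pc₁ Pb₁ Pc₂ Pb₂ = 0)
    (hP2 : dof2 A₁ A₃ E n₂ Pc₁ Pb₁ Pc₂ Pb₂ = 0)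
    (hP3 : dof3 A₁ A₂ n₃ Pc₂ Pb₂ = 0)
    (hPn : ⟪rt Pc₁ Pb₁ xT - rt Pc₂ Pb₂ xT, n⟫ = 1)
    (hPt : β₁ * ⟪rt Pc₁ Pb₁ xT, t⟫ - β₂ * ⟪rt Pc₂ Pb₂ xT, t⟫ = 0)
    (hPd : 2 * Pb₁ - 2 * Pb₂ = 0)
    -- the auxiliary pair Υ: zero degrees of freedom, jump data (0, 1, 0)
    (Uc₁ Uc₂ : V2) (Ub₁ Ub₂ : ℝ)
    (hU1 : dof1 A₂ A₃ D n₁ Uc₁ Ub₁ Uc₂ Ub₂ = 0)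
    (hU2 : dof2 A₁ A₃ E n₂ Uc₁ Ub₁ Uc₂ Ub₂ = 0)
    (hU3 : dof3 A₁ A₂ n₃ Uc₂ Ub₂ = 0)
    (hUn : ⟪rt Uc₁ Ub₁ xT - rt Uc₂ Ub₂ xT, n⟫ = 0)
    (hUt : β₁ * ⟪rt Uc₁ Ub₁ xT, t⟫ - β₂ * ⟪rt Uc₂ Ub₂ xT, t⟫ = 1)
    (hUd : 2 * Ub₁ - 2 * Ub₂ = 0)
    -- the auxiliary pair Θ: zero degrees of freedom, jump data (0, 0, 1)
    (Hc₁ Hc₂ : V2) (Hb₁ Hb₂ : ℝ)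
    (hH1 : dof1 A₂ A₃ D n₁ Hc₁ Hb₁ Hc₂ Hb₂ = 0)
    (hH2 : dof2 A₁ A₃ E n₂ Hc₁ Hb₁ Hc₂ Hb₂ = 0)
    (hH3 : dof3 A₁ A₂ n₃ Hc₂ Hb₂ = 0)
    (hHn : ⟪rt Hc₁ Hb₁ xT - rt Hc₂ Hb₂ xT, n⟫ = 0)
    (hHt : β₁ * ⟪rt Hc₁ Hb₁ xT, t⟫ - β₂ * ⟪rt Hc₂ Hb₂ xT, t⟫ = 0)
    (hHd : 2 * Hb₁ - 2 * Hb₂ = 1)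
    -- the IFE basis pairs φ⁽ⁱ⁾ with N_j(φ⁽ⁱ⁾) = δᵢⱼ
    (f1c₁ f1c₂ f2c₁ f2c₂ f3c₁ f3c₂ : V2) (f1b₁ f1b₂ f2b₁ f2b₂ f3b₁ f3b₂ : ℝ)
    (hf1 : ifeCond D E xT t n β₁ β₂ f1c₁ f1b₁ f1c₂ f1b₂)
    (hf1d1 : dof1 A₂ A₃ D n₁ f1c₁ f1b₁ f1c₂ f1b₂ = 1)
    (hf1d2 : dof2 A₁ A₃ E n₂ f1c₁ f1b₁ f1c₂ f1b₂ = 0)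
    (hf1d3 : dof3 A₁ A₂ n₃ f1c₂ f1b₂ = 0)
    (hf2 : ifeCond D E xT t n β₁ β₂ f2c₁ f2b₁ f2c₂ f2b₂)
    (hf2d1 : dof1 A₂ A₃ D n₁ f2c₁ f2b₁ f2c₂ f2b₂ = 0)
    (hf2d2 : dof2 A₁ A₃ E n₂ f2c₁ f2b₁ f2c₂ f2b₂ = 1)
    (hf2d3 : dof3 A₁ A₂ n₃ f2c₂ f2b₂ = 0)
    (hf3 : ifeCond D E xT t n β₁ β₂ f3c₁ f3b₁ f3c₂ f3b₂)
    (hf3d1 : dof1 A₂ A₃ D n₁ f3c₁ f3b₁ f3c₂ f3b₂ = 0)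
    (hf3d2 : dof2 A₁ A₃ E n₂ f3c₁ f3b₁ f3c₂ f3b₂ = 0)
    (hf3d3 : dof3 A₁ A₂ n₃ f3c₂ f3b₂ = 1)
    -- an arbitrary pair w
    (wc₁ wc₂ : V2) (wb₁ wb₂ : ℝ) :
    (∀ x, rt wc₁ wb₁ x =
        ⟪rt wc₁ wb₁ xT - rt wc₂ wb₂ xT, n⟫ • rt Pc₁ Pb₁ x +
          (β₁ * ⟪rt wc₁ wb₁ xT, t⟫ - β₂ * ⟪rt wc₂ wb₂ xT, t⟫) • rt Uc₁ Ub₁ x +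
          (2 * wb₁ - 2 * wb₂) • rt Hc₁ Hb₁ x +
          (dof1 A₂ A₃ D n₁ wc₁ wb₁ wc₂ wb₂) • rt f1c₁ f1b₁ x +
          (dof2 A₁ A₃ E n₂ wc₁ wb₁ wc₂ wb₂) • rt f2c₁ f2b₁ x +
          (dof3 A₁ A₂ n₃ wc₂ wb₂) • rt f3c₁ f3b₁ x) ∧
      ∀ x, rt wc₂ wb₂ x =
        ⟪rt wc₁ wb₁ xT - rt wc₂ wb₂ xT, n⟫ • rt Pc₂ Pb₂ x +
          (β₁ * ⟪rt wc₁ wb₁ xT, t⟫ - β₂ * ⟪rt wc₂ wb₂ xT, t⟫) • rt Uc₂ Ub₂ x +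
          (2 * wb₁ - 2 * wb₂) • rt Hc₂ Hb₂ x +
          (dof1 A₂ A₃ D n₁ wc₁ wb₁ wc₂ wb₂) • rt f1c₂ f1b₂ x +
          (dof2 A₁ A₃ E n₂ wc₁ wb₁ wc₂ wb₂) • rt f2c₂ f2b₂ x +
          (dof3 A₁ A₂ n₃ wc₂ wb₂) • rt f3c₂ f3b₂ x := by
  set L := jmap A₁ A₂ A₃ D E xT t n n₁ n₂ n₃ β₁ β₂ with hL
  have hw : L (((wc₁, wb₁), (wc₂, wb₂)) : M6)
      = ![⟪rt wc₁ wb₁ xT - rt wc₂ wb₂ xT, n⟫,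
          β₁ * ⟪rt wc₁ wb₁ xT, t⟫ - β₂ * ⟪rt wc₂ wb₂ xT, t⟫,
          2 * wb₁ - 2 * wb₂,
          dof1 A₂ A₃ D n₁ wc₁ wb₁ wc₂ wb₂,
          dof2 A₁ A₃ E n₂ wc₁ wb₁ wc₂ wb₂,
          dof3 A₁ A₂ n₃ wc₂ wb₂] := by
    funext i; fin_cases i <;> rfl
  have hLP : L (((Pc₁, Pb₁), (Pc₂, Pb₂)) : M6) = ![1, 0, 0, 0, 0, 0] := by
    funext i; fin_cases i
    · exact hPn
    · exact hPt
    · exact hPd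
    · exact hP1
    · exact hP2
    · exact hP3
  have hLU : L (((Uc₁, Ub₁), (Uc₂, Ub₂)) : M6) = ![0, 1, 0, 0, 0, 0] := by
    funext i; fin_cases i
    · exact hUn
    · exact hUt
    · exact hUd
    · exact hU1
    · exact hU2
    · exact hU3
  have hLH : L (((Hc₁, Hb₁), (Hc₂, Hb₂)) : M6) = ![0, 0, 1, 0, 0, 0] := by
    funext i; fin_cases i
    · exact hHn
    · exact hHt
    · exact hHd
    · exact hH1
    · exact hH2
    · exact hH3
  have hLf1 : L (((f1c₁, f1b₁), (f1c₂, f1b₂)) : M6) = ![0, 0, 0, 1, 0, 0] := by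
    funext i; fin_cases i
    · exact hf1.1 xT hxT
    · exact sub_eq_zero_of_eq hf1.2.1
    · exact sub_eq_zero_of_eq hf1.2.2
    · exact hf1d1
    · exact hf1d2
    · exact hf1d3
  have hLf2 : L (((f2c₁, f2b₁), (f2c₂, f2b₂)) : M6) = ![0, 0, 0, 0, 1, 0] := by
    funext i; fin_cases i
    · exact hf2.1 xT hxT
    · exact sub_eq_zero_of_eq hf2.2.1
    · exact sub_eq_zero_of_eq hf2.2.2
    · exact hf2d1
    · exact hf2d2
    · exact hf2d3
  have hLf3 : L (((f3c₁, f3b₁), (f3c₂, f3b₂)) : M6) = ![0, 0, 0, 0, 0, 1] := by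
    funext i; fin_cases i
    · exact hf3.1 xT hxT
    · exact sub_eq_zero_of_eq hf3.2.1
    · exact sub_eq_zero_of_eq hf3.2.2
    · exact hf3d1
    · exact hf3d2
    · exact hf3d3
  have hsurj : Function.Surjective L := by
    intro v
    refine ⟨v 0 • (((Pc₁, Pb₁), (Pc₂, Pb₂)) : M6) + v 1 • (((Uc₁, Ub₁), (Uc₂, Ub₂)) : M6)
        + v 2 • (((Hc₁, Hb₁), (Hc₂, Hb₂)) : M6) + v 3 • (((f1c₁, f1b₁), (f1c₂, f1b₂)) : M6)
        + v 4 • (((f2c₁, f2b₁), (f2c₂, f2b₂)) : M6) + v 5 • (((f3c₁, f3b₁), (f3c₂, f3b₂)) : M6),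
      ?_⟩
    simp only [map_add, _root_.map_smul, hLP, hLU, hLH, hLf1, hLf2, hLf3]
    funext i; fin_cases i <;>
      simp [Pi.add_apply, Pi.smul_apply, smul_eq_mul,
        show ((5 : Fin 6)) = (4 : Fin 5).succ from rfl, Matrix.cons_val_succ]
  have hfr : Module.finrank ℝ M6 = Module.finrank ℝ (Fin 6 → ℝ) := by
    simp [M6, Module.finrank_prod, Module.finrank_pi, finrank_euclideanSpace]
  have hinj : Function.Injective L :=
    (LinearMap.injective_iff_surjective_of_finrank_eq_finrank hfr).mpr hsurj
  have hcombo : L (⟪rt wc₁ wb₁ xT - rt wc₂ wb₂ xT, n⟫ • (((Pc₁, Pb₁), (Pc₂, Pb₂)) : M6)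
        + (β₁ * ⟪rt wc₁ wb₁ xT, t⟫ - β₂ * ⟪rt wc₂ wb₂ xT, t⟫) • (((Uc₁, Ub₁), (Uc₂, Ub₂)) : M6)
        + (2 * wb₁ - 2 * wb₂) • (((Hc₁, Hb₁), (Hc₂, Hb₂)) : M6)
        + (dof1 A₂ A₃ D n₁ wc₁ wb₁ wc₂ wb₂) • (((f1c₁, f1b₁), (f1c₂, f1b₂)) : M6)
        + (dof2 A₁ A₃ E n₂ wc₁ wb₁ wc₂ wb₂) • (((f2c₁, f2b₁), (f2c₂, f2b₂)) : M6)
        + (dof3 A₁ A₂ n₃ wc₂ wb₂) • (((f3c₁, f3b₁), (f3c₂, f3b₂)) : M6))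
      = L (((wc₁, wb₁), (wc₂, wb₂)) : M6) := by
    rw [hw]
    simp only [map_add, _root_.map_smul, hLP, hLU, hLH, hLf1, hLf2, hLf3]
    funext i; fin_cases i <;>
      simp [Pi.add_apply, Pi.smul_apply, smul_eq_mul,
        show ((5 : Fin 6)) = (4 : Fin 5).succ from rfl, Matrix.cons_val_succ]
  have heq := hinj hcombo
  constructor <;> intro x
  · show rt ((((wc₁, wb₁), (wc₂, wb₂)) : M6).1.1) ((((wc₁, wb₁), (wc₂, wb₂)) : M6).1.2) x = _
    rw [← heq]
    simp only [Prod.fst_add, Prod.snd_add, Prod.smul_fst, Prod.smul_snd, rt, smul_eq_mul]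
    module
  · show rt ((((wc₁, wb₁), (wc₂, wb₂)) : M6).2.1) ((((wc₁, wb₁), (wc₂, wb₂)) : M6).2.2) x = _
    rw [← heq]
    simp only [Prod.fst_add, Prod.snd_add, Prod.smul_fst, Prod.smul_snd, rt, smul_eq_mul]
    module
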